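/- arXiv:gr-qc/0302098 — 3 statements merged into one kernel-verified Lean document; each statement's English description precedes it below -/
import Mathlib

section
/- Let Ω : (0,b] → ℝ be C³ with Ω > 0 on (0,b], Ω continuous on [0,b] with Ω(0)=0, and suppose L(T) = Ω''(T)Ω(T)/(Ω'(T))² has a limit λ ≠ 1 as T → 0⁺ (with Ω' ≠ 0 near 0). If k : ℝ → ℝ is C³ and we set Ω̃(T) = e^(k(T))·Ω(T), then Ω̃(0)=0, Ω̃ is continuous on [0,b] and C³ on (0,b], Ω̃ > 0 on (0,b], and L̃(T) = Ω̃''(T)Ω̃(T)/(Ω̃'(T))² also tends to λ as T → 0⁺. -/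
open Real Filter Set Topology

-- helper: existence of limit of g at 0+
lemma g_limit_exists (eps : ℝ) (heps : 0 < eps) (g d : ℝ → ℝ) (mu : ℝ) (hmu : mu ≠ 0)
    (hd : ∀ T ∈ Set.Ioo 0 eps, HasDerivAt g (d T) T)
    (hclose : ∀ T ∈ Set.Ioo 0 eps, |d T - mu| < |mu| / 2) :
    ∃ c, Tendsto g (𝓝[>] (0:ℝ)) (𝓝 c) := by
  have hne : (Set.Ioo (0:ℝ) eps).Nonempty := ⟨eps/2, by constructor <;> nlinarith⟩
  have hconv : Convex ℝ (Set.Ioo (0:ℝ) eps) := convex_Ioo _ _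
  have hbound : ∀ T ∈ Set.Ioo 0 eps, ‖d T‖ ≤ 2 * |mu| := by
    intro T hT
    have := hclose T hT
    rw [Real.norm_eq_abs]
    have h1 : |d T| - |mu| ≤ |d T - mu| := by
      have := abs_sub_abs_le_abs_sub (d T) mu; linarith
    have : |mu| ≥ 0 := abs_nonneg _
    linarith [abs_sub_abs_le_abs_sub (d T) mu, hclose T hT]
  have hlip : ∀ x ∈ Set.Ioo (0:ℝ) eps, ∀ y ∈ Set.Ioo (0:ℝ) eps,
      ‖g y - g x‖ ≤ (2*|mu|) * ‖y - x‖ := by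
    intro x hx y hy
    exact Convex.norm_image_sub_le_of_norm_hasDerivWithin_le
      (fun z hz => (hd z hz).hasDerivWithinAt) hbound hconv hx hy
  have hmem : eps/2 ∈ Set.Ioo (0:ℝ) eps := ⟨by positivity, by linarith⟩
  have hbddB : BddBelow (g '' Set.Ioo (0:ℝ) eps) := by
    refine ⟨g (eps/2) - (2*|mu|) * eps, ?_⟩
    rintro _ ⟨T, hT, rfl⟩
    have := hlip (eps/2) hmem T hT
    rw [Real.norm_eq_abs, Real.norm_eq_abs] at this
    have h2 : |T - eps/2| ≤ eps := by
      rw [abs_le]; constructor <;> [linarith [hT.1, hT.2]; linarith [hT.1, hT.2]]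
    have h3 : g (eps/2) - g T ≤ |g T - g (eps/2)| := by
      rw [abs_sub_comm]; exact le_abs_self _
    nlinarith [abs_nonneg mu]
  have hbddA : BddAbove (g '' Set.Ioo (0:ℝ) eps) := by
    refine ⟨g (eps/2) + (2*|mu|) * eps, ?_⟩
    rintro _ ⟨T, hT, rfl⟩
    have := hlip (eps/2) hmem T hT
    rw [Real.norm_eq_abs, Real.norm_eq_abs] at this
    have h2 : |T - eps/2| ≤ eps := by
      rw [abs_le]; constructor <;> [linarith [hT.1, hT.2]; linarith [hT.1, hT.2]]
    have h3 : g T - g (eps/2) ≤ |g T - g (eps/2)| := le_abs_self _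
    nlinarith [abs_nonneg mu]
  rcases lt_or_gt_of_ne hmu with hneg | hpos
  · -- mu < 0 : d T < 0, g antitone
    have hanti : StrictAntiOn g (Set.Ioo 0 eps) := by
      apply strictAntiOn_of_hasDerivWithinAt_neg hconv
      · exact fun z hz => (hd z hz).continuousAt.continuousWithinAt
      · intro z hz
        rw [interior_Ioo] at hz
        exact (hd z hz).hasDerivWithinAt
      · intro z hz
        rw [interior_Ioo] at hz
        have := hclose z hz
        rw [abs_of_neg hneg] at this
        have := abs_lt.mp this
        linarith
    exact ⟨_, AntitoneOn.tendsto_nhdsWithin_Ioo_right hne hanti.antitoneOn hbddA⟩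
  · have hmono : StrictMonoOn g (Set.Ioo 0 eps) := by
      apply strictMonoOn_of_hasDerivWithinAt_pos hconv
      · exact fun z hz => (hd z hz).continuousAt.continuousWithinAt
      · intro z hz
        rw [interior_Ioo] at hz
        exact (hd z hz).hasDerivWithinAt
      · intro z hz
        rw [interior_Ioo] at hz
        have := hclose z hz
        rw [abs_of_pos hpos] at this
        have := abs_lt.mp this
        linarith
    exact ⟨_, MonotoneOn.tendsto_nhdsWithin_Ioo_right hne hmono.monotoneOn hbddB⟩

lemma div_div_same_aux (x y z : ℝ) (hz : z ≠ 0) : (x / z) / (y / z) = x / y := by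
  rcases eq_or_ne y 0 with rfl | hy
  · simp
  · field_simp

lemma calc1 (e w p q w2 O : ℝ) (he : e ≠ 0) (hw : w ≠ 0) :
    (e*(p*(p*O+w)+(q*O+p*w+w2)))*(e*O) / (e*(p*O+w))^2
    = (w2*O/w^2 + 2*p*(O/w) + (q+p^2)*(O/w)^2) / (1+p*(O/w))^2 := by
  have hone : (1 + p * (O / w))^2 = ((p*O + w)^2)/w^2 := by
    field_simp
    ring
  have hnum : w2*O/w^2 + 2*p*(O/w) + (q+p^2)*(O/w)^2
      = (O*(p*(p*O+w)+(q*O+p*w+w2)))/w^2 := by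
    field_simp
    ring
  have hl : (e*(p*(p*O+w)+(q*O+p*w+w2)))*(e*O) = e^2 * (O*(p*(p*O+w)+(q*O+p*w+w2))) := by ring
  have hl2 : (e*(p*O+w))^2 = e^2 * (p*O+w)^2 := by ring
  rw [hone, hnum, hl, hl2, mul_div_mul_left _ _ (pow_ne_zero 2 he),
    div_div_same_aux _ _ _ (pow_ne_zero 2 hw)]

lemma g_limit_zero (b : ℝ) (hb : 0 < b) (Ω : ℝ → ℝ)
    (hpos : ∀ T ∈ Set.Ioc 0 b, 0 < Ω T)
    (hΩ0 : Tendsto Ω (𝓝[>] (0:ℝ)) (𝓝 0))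
    (hdiff : ∀ᶠ T in 𝓝[>] (0:ℝ), HasDerivAt Ω (deriv Ω T) T)
    (c : ℝ)
    (hc : Tendsto (fun T => Ω T / deriv Ω T) (𝓝[>] (0:ℝ)) (𝓝 c)) : c = 0 := by
  by_contra hc0
  have hIoo : Set.Ioo (0:ℝ) b ∈ 𝓝[>] (0:ℝ) := Ioo_mem_nhdsGT_of_mem ⟨le_refl 0, hb⟩
  have habs : ∀ᶠ T in 𝓝[>] (0:ℝ), |Ω T / deriv Ω T - c| < |c| / 2 := by
    have := Metric.tendsto_nhds.mp hc (|c|/2) (by positivity)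
    filter_upwards [this] with T hT
    rwa [Real.dist_eq] at hT
  have hset : ∀ᶠ T in 𝓝[>] (0:ℝ),
      HasDerivAt (fun x => Real.log (Ω x)) (deriv Ω T / Ω T) T ∧
      |deriv Ω T / Ω T| ≤ 2 / |c| := by
    filter_upwards [hIoo, habs, hdiff] with T hT habsT hdT
    have hΩpos : 0 < Ω T := hpos T ⟨hT.1, hT.2.le⟩
    have hgT : |Ω T / deriv Ω T| > |c| / 2 := by
      have := abs_sub_abs_le_abs_sub (Ω T / deriv Ω T) c
      have h2 := abs_sub_abs_le_abs_sub c (Ω T / deriv Ω T)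
      rw [abs_sub_comm] at h2
      linarith
    constructor
    · exact hdT.log hΩpos.ne'
    · have hcpos : (0:ℝ) < |c| := abs_pos.mpr hc0
      have hgTne : Ω T / deriv Ω T ≠ 0 := by
        intro h; rw [h] at hgT; simp at hgT; linarith
      have hinv : deriv Ω T / Ω T = (Ω T / deriv Ω T)⁻¹ := by
        rw [inv_div]
      rw [hinv, abs_inv]
      rw [inv_le_comm₀ (abs_pos.mpr hgTne) (by positivity), inv_div]
      linarith
  obtain ⟨s, hs, hsub⟩ : ∃ s ∈ 𝓝[>] (0:ℝ), s ⊆ {T | HasDerivAt (fun x => Real.log (Ω x)) (deriv Ω T / Ω T) T ∧ |deriv Ω T / Ω T| ≤ 2 / |c|} :=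
    ⟨_, hset, fun x hx => hx⟩
  obtain ⟨eps, hepsmem, hIoosub⟩ := (mem_nhdsGT_iff_exists_Ioo_subset' hb).mp hs
  have heps : 0 < eps := by
    first
    | exact hepsmem
    | exact hepsmem.1
  -- MVT bound on Ioo 0 eps
  have hconv : Convex ℝ (Set.Ioo (0:ℝ) eps) := convex_Ioo _ _
  have hmid : eps/2 ∈ Set.Ioo (0:ℝ) eps := ⟨by positivity, by linarith⟩
  have hbd : ∀ T ∈ Set.Ioo (0:ℝ) eps,
      ‖Real.log (Ω T) - Real.log (Ω (eps/2))‖ ≤ (2/|c|) * ‖T - eps/2‖ := by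
    intro T hT
    exact Convex.norm_image_sub_le_of_norm_hasDerivWithin_le
      (fun z hz => ((hsub (hIoosub hz)).1).hasDerivWithinAt)
      (fun z hz => (hsub (hIoosub hz)).2) hconv hmid hT
  -- log ∘ Ω → -∞
  have hΩpos' : ∀ᶠ T in 𝓝[>] (0:ℝ), Ω T ∈ Set.Ioi (0:ℝ) := by
    filter_upwards [hIoo] with T hT; exact hpos T ⟨hT.1, hT.2.le⟩
  have hΩto : Tendsto Ω (𝓝[>] (0:ℝ)) (𝓝[>] (0:ℝ)) :=
    tendsto_nhdsWithin_of_tendsto_nhds_of_eventually_within _ hΩ0 hΩpos'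
  have hlog : Tendsto (fun T => Real.log (Ω T)) (𝓝[>] (0:ℝ)) atBot :=
    Real.tendsto_log_nhdsGT_zero.comp hΩto
  have hev : ∀ᶠ T in 𝓝[>] (0:ℝ),
      Real.log (Ω T) < Real.log (Ω (eps/2)) - (2/|c|) * eps := by
    exact hlog.eventually (eventually_lt_atBot _)
  have hevIoo : Set.Ioo (0:ℝ) eps ∈ 𝓝[>] (0:ℝ) := Ioo_mem_nhdsGT_of_mem ⟨le_refl 0, heps⟩
  have hmemev : ∀ᶠ T in 𝓝[>] (0:ℝ), T ∈ Set.Ioo 0 eps := hevIoo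
  obtain ⟨T, hT1, hT2⟩ := (hmemev.and hev).exists
  have := hbd T hT1
  rw [Real.norm_eq_abs, Real.norm_eq_abs] at this
  have h1 : Real.log (Ω (eps/2)) - Real.log (Ω T) ≤ |Real.log (Ω T) - Real.log (Ω (eps/2))| := by
    rw [abs_sub_comm]; exact le_abs_self _
  have h2 : |T - eps/2| ≤ eps := by
    rw [abs_le]; constructor <;> [linarith [hT1.1, hT1.2]; linarith [hT1.1, hT1.2]]
  have hcpos : (0:ℝ) < |c| := abs_pos.mpr hc0
  nlinarith [div_pos (by norm_num : (0:ℝ) < 2) hcpos]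

theorem stmt_0 (b : ℝ) (hb : 0 < b) (Ω : ℝ → ℝ) (lam : ℝ)
    (hpos : ∀ T ∈ Set.Ioc 0 b, 0 < Ω T)
    (hcont : ContinuousOn Ω (Set.Icc 0 b))
    (hΩ0 : Ω 0 = 0)
    (hC3 : ContDiffOn ℝ 3 Ω (Set.Ioc 0 b))
    (hderiv_ne : ∀ᶠ T in 𝓝[>] (0:ℝ), deriv Ω T ≠ 0)
    (hL : Tendsto (fun T => deriv (deriv Ω) T * Ω T / (deriv Ω T) ^ 2)
      (𝓝[>] (0:ℝ)) (𝓝 lam))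
    (hlam : lam ≠ 1)
    (k : ℝ → ℝ) (hk : ContDiff ℝ 3 k) :
    (fun T => Real.exp (k T) * Ω T) 0 = 0 ∧
    ContinuousOn (fun T => Real.exp (k T) * Ω T) (Set.Icc 0 b) ∧
    ContDiffOn ℝ 3 (fun T => Real.exp (k T) * Ω T) (Set.Ioc 0 b) ∧
    (∀ T ∈ Set.Ioc 0 b, 0 < (fun T => Real.exp (k T) * Ω T) T) ∧
    Tendsto (fun T => deriv (deriv (fun T => Real.exp (k T) * Ω T)) T *
        (fun T => Real.exp (k T) * Ω T) T /
        (deriv (fun T => Real.exp (k T) * Ω T) T) ^ 2)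
      (𝓝[>] (0:ℝ)) (𝓝 lam) := by
  have hexpC : ContDiff ℝ 3 (fun T => Real.exp (k T)) := Real.contDiff_exp.comp hk
  refine ⟨by simp [hΩ0], hexpC.continuous.continuousOn.mul hcont,
    hexpC.contDiffOn.mul hC3, fun T hT => mul_pos (Real.exp_pos _) (hpos T hT), ?_⟩
  have hIoo : Set.Ioo (0:ℝ) b ∈ 𝓝[>] (0:ℝ) := Ioo_mem_nhdsGT_of_mem ⟨le_refl 0, hb⟩
  have hVopen : IsOpen (Set.Ioo (0:ℝ) b) := isOpen_Ioo
  have hC3' : ContDiffOn ℝ 3 Ω (Set.Ioo 0 b) := hC3.mono Set.Ioo_subset_Ioc_self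
  have hC2d : ContDiffOn ℝ 2 (deriv Ω) (Set.Ioo 0 b) :=
    hC3'.deriv_of_isOpen hVopen (by norm_num)
  have hD1 : ∀ T ∈ Set.Ioo (0:ℝ) b, HasDerivAt Ω (deriv Ω T) T := by
    intro T hT
    exact ((hC3'.differentiableOn (by norm_num)).differentiableAt
      (hVopen.mem_nhds hT)).hasDerivAt
  have hD2 : ∀ T ∈ Set.Ioo (0:ℝ) b, HasDerivAt (deriv Ω) (deriv (deriv Ω) T) T := by
    intro T hT
    exact ((hC2d.differentiableOn (by norm_num)).differentiableAt
      (hVopen.mem_nhds hT)).hasDerivAt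
  -- derivative of g
  have hg' : ∀ᶠ T in 𝓝[>] (0:ℝ), HasDerivAt (fun x => Ω x / deriv Ω x)
      (1 - deriv (deriv Ω) T * Ω T / (deriv Ω T) ^ 2) T := by
    filter_upwards [hIoo, hderiv_ne] with T hT hne
    have h : HasDerivAt (fun x => Ω x / deriv Ω x) ((deriv Ω T * deriv Ω T - Ω T * deriv (deriv Ω) T) / deriv Ω T ^ 2) T := (hD1 T hT).div (hD2 T hT) hne
    convert h using 1
    field_simp
  -- g tends to some c
  set mu := 1 - lam with hmu_def
  have hmu : mu ≠ 0 := sub_ne_zero.mpr (Ne.symm hlam)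
  have hgd : Tendsto (fun T => 1 - deriv (deriv Ω) T * Ω T / (deriv Ω T) ^ 2)
      (𝓝[>] (0:ℝ)) (𝓝 mu) := tendsto_const_nhds.sub hL
  have hclose : ∀ᶠ T in 𝓝[>] (0:ℝ),
      |(1 - deriv (deriv Ω) T * Ω T / (deriv Ω T) ^ 2) - mu| < |mu| / 2 := by
    have := Metric.tendsto_nhds.mp hgd (|mu|/2) (by positivity)
    filter_upwards [this] with T hT
    rwa [Real.dist_eq] at hT
  obtain ⟨s, hs, hsub⟩ : ∃ s ∈ 𝓝[>] (0:ℝ), s ⊆ {T | HasDerivAt (fun x => Ω x / deriv Ω x)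
      (1 - deriv (deriv Ω) T * Ω T / (deriv Ω T) ^ 2) T ∧
      |(1 - deriv (deriv Ω) T * Ω T / (deriv Ω T) ^ 2) - mu| < |mu| / 2} :=
    ⟨_, hg'.and hclose, fun x hx => hx⟩
  obtain ⟨eps, hepsmem, hIoosub⟩ := (mem_nhdsGT_iff_exists_Ioo_subset' hb).mp hs
  have heps : 0 < eps := hepsmem
  obtain ⟨c, hc⟩ := g_limit_exists eps heps (fun x => Ω x / deriv Ω x)
    (fun T => 1 - deriv (deriv Ω) T * Ω T / (deriv Ω T) ^ 2) mu hmu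
    (fun T hT => (hsub (hIoosub hT)).1) (fun T hT => (hsub (hIoosub hT)).2)
  -- Ω → 0 along 𝓝[>]0
  have hΩto0 : Tendsto Ω (𝓝[>] (0:ℝ)) (𝓝 0) := by
    have h1 : ContinuousWithinAt Ω (Set.Icc 0 b) 0 :=
      hcont 0 ⟨le_refl 0, hb.le⟩
    have h2 : Tendsto Ω (𝓝[Set.Icc 0 b] (0:ℝ)) (𝓝 0) := by
      simpa [hΩ0] using h1.tendsto
    refine h2.mono_left ?_
    rw [← nhdsWithin_Ioc_eq_nhdsGT hb]
    exact nhdsWithin_mono _ Set.Ioc_subset_Icc_self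
  have hdiffev : ∀ᶠ T in 𝓝[>] (0:ℝ), HasDerivAt Ω (deriv Ω T) T := by
    filter_upwards [hIoo] with T hT; exact hD1 T hT
  have hc0 : c = 0 := g_limit_zero b hb Ω hpos hΩto0 hdiffev c hc
  have hg0 : Tendsto (fun T => Ω T / deriv Ω T) (𝓝[>] (0:ℝ)) (𝓝 0) := hc0 ▸ hc
  -- smoothness of k
  have hk2 : ContDiff ℝ 2 (deriv k) := by
    have h := ContDiff.iterate_deriv' 2 1 (f := k) (by exact_mod_cast hk)
    simpa using h
  have hk1 : ContDiff ℝ 1 (deriv (deriv k)) := by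
    have h := ContDiff.iterate_deriv' 1 1 (f := deriv k) (by exact_mod_cast hk2)
    simpa using h
  have hkd1 : ∀ T : ℝ, HasDerivAt k (deriv k T) T := fun T =>
    ((hk.differentiable (by norm_num)) T).hasDerivAt
  have hkd2 : ∀ T : ℝ, HasDerivAt (deriv k) (deriv (deriv k) T) T := fun T =>
    ((hk2.differentiable (by norm_num)) T).hasDerivAt
  -- first derivative of Ω̃
  have h1 : ∀ T ∈ Set.Ioo (0:ℝ) b, HasDerivAt (fun x => Real.exp (k x) * Ω x)
      (Real.exp (k T) * (deriv k T * Ω T + deriv Ω T)) T := by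
    intro T hT
    have he : HasDerivAt (fun x => Real.exp (k x)) (Real.exp (k T) * deriv k T) T :=
      (hkd1 T).exp
    have : HasDerivAt (fun x => Real.exp (k x) * Ω x)
        (Real.exp (k T) * deriv k T * Ω T + Real.exp (k T) * deriv Ω T) T := he.mul (hD1 T hT)
    convert this using 1
    try ring
  have h1' : Set.EqOn (deriv (fun x => Real.exp (k x) * Ω x))
      (fun T => Real.exp (k T) * (deriv k T * Ω T + deriv Ω T)) (Set.Ioo 0 b) :=
    fun T hT => (h1 T hT).deriv
  -- second derivative
  have h2 : ∀ T ∈ Set.Ioo (0:ℝ) b,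
      HasDerivAt (fun T => Real.exp (k T) * (deriv k T * Ω T + deriv Ω T))
      (Real.exp (k T) * (deriv k T * (deriv k T * Ω T + deriv Ω T) +
        (deriv (deriv k) T * Ω T + deriv k T * deriv Ω T + deriv (deriv Ω) T))) T := by
    intro T hT
    have he : HasDerivAt (fun x => Real.exp (k x)) (Real.exp (k T) * deriv k T) T :=
      (hkd1 T).exp
    have hin : HasDerivAt (fun x => deriv k x * Ω x + deriv Ω x)
        (deriv (deriv k) T * Ω T + deriv k T * deriv Ω T + deriv (deriv Ω) T) T := by
      have : HasDerivAt (fun x => deriv k x * Ω x + deriv Ω x)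
          (deriv (deriv k) T * Ω T + deriv k T * deriv Ω T + deriv (deriv Ω) T) T :=
        ((hkd2 T).mul (hD1 T hT)).add (hD2 T hT)
      convert this using 1
      try ring
    have : HasDerivAt (fun x => Real.exp (k x) * (deriv k x * Ω x + deriv Ω x))
        (Real.exp (k T) * deriv k T * (deriv k T * Ω T + deriv Ω T) +
          Real.exp (k T) * (deriv (deriv k) T * Ω T + deriv k T * deriv Ω T + deriv (deriv Ω) T)) T :=
      he.mul hin
    convert this using 1
    try ring
  have h2' : ∀ T ∈ Set.Ioo (0:ℝ) b,
      deriv (deriv (fun x => Real.exp (k x) * Ω x)) T =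
      Real.exp (k T) * (deriv k T * (deriv k T * Ω T + deriv Ω T) +
        (deriv (deriv k) T * Ω T + deriv k T * deriv Ω T + deriv (deriv Ω) T)) := by
    intro T hT
    have hev : deriv (fun x => Real.exp (k x) * Ω x)
        =ᶠ[𝓝 T] (fun T => Real.exp (k T) * (deriv k T * Ω T + deriv Ω T)) :=
      Filter.eventuallyEq_of_mem (hVopen.mem_nhds hT) h1'
    rw [hev.deriv_eq, (h2 T hT).deriv]
  -- eventual equality with the rational expression
  have heq : ∀ᶠ T in 𝓝[>] (0:ℝ),
      deriv (deriv (fun T => Real.exp (k T) * Ω T)) T *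
        (fun T => Real.exp (k T) * Ω T) T /
        (deriv (fun T => Real.exp (k T) * Ω T) T) ^ 2 =
      (deriv (deriv Ω) T * Ω T / (deriv Ω T) ^ 2 +
        2 * deriv k T * (Ω T / deriv Ω T) +
        (deriv (deriv k) T + (deriv k T) ^ 2) * (Ω T / deriv Ω T) ^ 2) /
        (1 + deriv k T * (Ω T / deriv Ω T)) ^ 2 := by
    filter_upwards [hIoo, hderiv_ne] with T hT hne
    have hcalc := calc1 (Real.exp (k T)) (deriv Ω T) (deriv k T) (deriv (deriv k) T)
      (deriv (deriv Ω) T) (Ω T) (Real.exp_ne_zero _) hne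
    beta_reduce
    rw [h2' T hT, h1' hT]
    exact hcalc
  -- limit of the rational expression
  have hk'0 : Tendsto (deriv k) (𝓝[>] (0:ℝ)) (𝓝 (deriv k 0)) :=
    (hk2.continuous.tendsto 0).mono_left nhdsWithin_le_nhds
  have hk''0 : Tendsto (deriv (deriv k)) (𝓝[>] (0:ℝ)) (𝓝 (deriv (deriv k) 0)) :=
    (hk1.continuous.tendsto 0).mono_left nhdsWithin_le_nhds
  have hnum : Tendsto (fun T => deriv (deriv Ω) T * Ω T / (deriv Ω T) ^ 2 +
      2 * deriv k T * (Ω T / deriv Ω T) +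
      (deriv (deriv k) T + (deriv k T) ^ 2) * (Ω T / deriv Ω T) ^ 2)
      (𝓝[>] (0:ℝ)) (𝓝 (lam + 2 * deriv k 0 * 0 + (deriv (deriv k) 0 + (deriv k 0)^2) * 0^2)) :=
    (hL.add (((tendsto_const_nhds.mul hk'0)).mul hg0)).add
      ((hk''0.add (hk'0.pow 2)).mul (hg0.pow 2))
  have hden : Tendsto (fun T => (1 + deriv k T * (Ω T / deriv Ω T)) ^ 2)
      (𝓝[>] (0:ℝ)) (𝓝 ((1 + deriv k 0 * 0) ^ 2)) :=
    (tendsto_const_nhds.add (hk'0.mul hg0)).pow 2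
  have hphi : Tendsto (fun T => (deriv (deriv Ω) T * Ω T / (deriv Ω T) ^ 2 +
      2 * deriv k T * (Ω T / deriv Ω T) +
      (deriv (deriv k) T + (deriv k T) ^ 2) * (Ω T / deriv Ω T) ^ 2) /
      (1 + deriv k T * (Ω T / deriv Ω T)) ^ 2) (𝓝[>] (0:ℝ)) _ := hnum.div hden (by norm_num)
  have hphi' : Tendsto (fun T => (deriv (deriv Ω) T * Ω T / (deriv Ω T) ^ 2 +
      2 * deriv k T * (Ω T / deriv Ω T) +
      (deriv (deriv k) T + (deriv k T) ^ 2) * (Ω T / deriv Ω T) ^ 2) /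
      (1 + deriv k T * (Ω T / deriv Ω T)) ^ 2) (𝓝[>] (0:ℝ)) (𝓝 lam) := by
    convert hphi using 2
    norm_num
  exact hphi'.congr' (by filter_upwards [heq] with T h using h.symm)
end

section
/- Let Ω : (0,b] → ℝ be C² with Ω > 0, Ω' > 0 on (0,b], Ω(T) → 0 as T → 0⁺, and suppose L(T) = Ω''(T)Ω(T)/(Ω'(T))² tends to a finite limit λ ≠ 1 as T → 0⁺. Then Ω(T)/Ω'(T) → 0 as T → 0⁺. -/
open Real Filter Set Topology

theorem stmt_1 (b : ℝ) (hb : 0 < b) (Ω : ℝ → ℝ) (lam : ℝ)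
    (hd1 : ∀ T ∈ Set.Ioc 0 b, DifferentiableAt ℝ Ω T)
    (hd2 : ∀ T ∈ Set.Ioc 0 b, DifferentiableAt ℝ (deriv Ω) T)
    (hpos : ∀ T ∈ Set.Ioc 0 b, 0 < Ω T)
    (hpos' : ∀ T ∈ Set.Ioc 0 b, 0 < deriv Ω T)
    (hΩ0 : Tendsto Ω (𝓝[>] (0:ℝ)) (𝓝 0))
    (hL : Tendsto (fun T => deriv (deriv Ω) T * Ω T / (deriv Ω T) ^ 2)
      (𝓝[>] (0:ℝ)) (𝓝 lam))
    (hlam : lam ≠ 1) :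
    Tendsto (fun T => Ω T / deriv Ω T) (𝓝[>] (0:ℝ)) (𝓝 0) := by
  set F : ℝ → ℝ := fun T => Ω T / deriv Ω T with hFdef
  set L : ℝ → ℝ := fun T => deriv (deriv Ω) T * Ω T / (deriv Ω T) ^ 2 with hLdef
  set c : ℝ := 1 - lam with hcdef
  have hc0 : c ≠ 0 := sub_ne_zero.mpr (Ne.symm hlam)
  have hcpos : 0 < |c| := abs_pos.mpr hc0
  set s : ℝ := if 0 < c then 1 else -1 with hsdef
  have hss : s * s = 1 := by
    rcases lt_or_ge 0 c with h | h
    · simp [hsdef, if_pos h]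
    · simp [hsdef, if_neg (not_lt.mpr h)]
  have habs_s : |s| = 1 := by
    rcases lt_or_ge 0 c with h | h
    · simp [hsdef, if_pos h]
    · simp [hsdef, if_neg (not_lt.mpr h)]
  -- derivative of F
  have hF' : ∀ T ∈ Set.Ioc (0:ℝ) b, HasDerivAt F (1 - L T) T := by
    intro T hT
    have h1 : HasDerivAt Ω (deriv Ω T) T := (hd1 T hT).hasDerivAt
    have h2 : HasDerivAt (deriv Ω) (deriv (deriv Ω) T) T := (hd2 T hT).hasDerivAt
    have hne : deriv Ω T ≠ 0 := (hpos' T hT).ne'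
    have := h1.div h2 hne
    convert this using 1
    show 1 - deriv (deriv Ω) T * Ω T / (deriv Ω T) ^ 2 = _
    field_simp
    all_goals rfl
  -- choose δ on which L is close to lam
  have hev : ∀ᶠ T in 𝓝[>] (0:ℝ), |L T - lam| < |c| / 2 := by
    have h := Metric.tendsto_nhds.mp hL (|c| / 2) (by positivity)
    simpa [Real.dist_eq] using h
  obtain ⟨δ₀, hδ₀, hδsub⟩ := mem_nhdsGT_iff_exists_Ioc_subset.mp hev
  set δ : ℝ := min δ₀ b with hδdef
  have hδpos : 0 < δ := lt_min hδ₀ hb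
  have hδb : δ ≤ b := min_le_right _ _
  have hδsubb : Set.Ioc (0:ℝ) δ ⊆ Set.Ioc 0 b := Set.Ioc_subset_Ioc_right hδb
  have hLδ : ∀ T ∈ Set.Ioc (0:ℝ) δ, |L T - lam| < |c| / 2 := by
    intro T hT
    exact hδsub ⟨hT.1, hT.2.trans (min_le_left _ _)⟩
  have hdiff : ∀ T ∈ Set.Ioc (0:ℝ) δ, |(1 - L T) - c| < |c| / 2 := by
    intro T hT
    have : (1 - L T) - c = -(L T - lam) := by rw [hcdef]; ring
    rw [this, abs_neg]
    exact hLδ T hT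
  -- sign and bound for the derivative of F on (0, δ]
  have hsign : ∀ T ∈ Set.Ioc (0:ℝ) δ, 0 < s * (1 - L T) := by
    intro T hT
    have h := abs_lt.mp (hdiff T hT)
    rcases lt_or_ge 0 c with hcp | hcn
    · rw [abs_of_pos hcp] at h
      simp only [hsdef, if_pos hcp, one_mul]
      linarith [h.1, h.2]
    · have hcn' : c < 0 := lt_of_le_of_ne hcn hc0
      rw [abs_of_neg hcn'] at h
      simp only [hsdef, if_neg (not_lt.mpr hcn), neg_mul, one_mul]
      linarith [h.1, h.2]
  have hbound : ∀ T ∈ Set.Ioc (0:ℝ) δ, |1 - L T| ≤ 3 * |c| / 2 := by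
    intro T hT
    have h := hdiff T hT
    calc |1 - L T| = |((1 - L T) - c) + c| := by ring_nf
      _ ≤ |(1 - L T) - c| + |c| := abs_add_le _ _
      _ ≤ 3 * |c| / 2 := by linarith
  -- G = s * F is monotone on (0, δ]
  set G : ℝ → ℝ := fun T => s * F T with hGdef
  have hG' : ∀ T ∈ Set.Ioc (0:ℝ) δ, HasDerivAt G (s * (1 - L T)) T := by
    intro T hT
    exact (hF' T (hδsubb hT)).const_mul s
  have hGcont : ContinuousOn G (Set.Ioc 0 δ) := by
    intro T hT
    exact ((hG' T hT).differentiableAt.continuousAt).continuousWithinAt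
  have hGmono : StrictMonoOn G (Set.Ioc 0 δ) := by
    apply strictMonoOn_of_deriv_pos (convex_Ioc 0 δ) hGcont
    intro x hx
    rw [interior_Ioc] at hx
    have hx' : x ∈ Set.Ioc (0:ℝ) δ := Set.Ioo_subset_Ioc_self hx
    rw [(hG' x hx').deriv]
    exact hsign x hx'
  -- MVT bound: G is bounded below on (0, δ)
  have hMVT : ∀ T ∈ Set.Ioo (0:ℝ) δ, G δ - 3 * |c| / 2 * δ ≤ G T := by
    intro T hT
    have hTδ : T < δ := hT.2
    have hcont : ContinuousOn G (Set.Icc T δ) :=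
      hGcont.mono (fun x hx => ⟨hT.1.trans_le hx.1, hx.2⟩)
    have hder : ∀ x ∈ Set.Ioo T δ, HasDerivAt G (s * (1 - L x)) x := by
      intro x hx
      exact hG' x ⟨hT.1.trans hx.1, hx.2.le⟩
    obtain ⟨ξ, hξ, hslope⟩ := exists_hasDerivAt_eq_slope G (fun x => s * (1 - L x)) hTδ hcont hder
    have hξ' : ξ ∈ Set.Ioc (0:ℝ) δ := ⟨hT.1.trans hξ.1, hξ.2.le⟩
    have habs : |s * (1 - L ξ)| ≤ 3 * |c| / 2 := by
      rw [abs_mul, habs_s, one_mul]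
      exact hbound ξ hξ'
    have hdiffG : G δ - G T = s * (1 - L ξ) * (δ - T) := by
      rw [eq_div_iff (sub_ne_zero.mpr (ne_of_gt hTδ))] at hslope
      linarith [hslope]
    have h1 : G δ - G T ≤ 3 * |c| / 2 * (δ - T) := by
      rw [hdiffG]
      calc s * (1 - L ξ) * (δ - T) ≤ |s * (1 - L ξ)| * (δ - T) := by
            apply mul_le_mul_of_nonneg_right (le_abs_self _) (by linarith)
        _ ≤ 3 * |c| / 2 * (δ - T) := by
            apply mul_le_mul_of_nonneg_right habs (by linarith)
    nlinarith [hT.1, hTδ, hcpos]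
  have hbdd : BddBelow (G '' Set.Ioo 0 δ) := by
    refine ⟨G δ - 3 * |c| / 2 * δ, ?_⟩
    rintro y ⟨T, hT, rfl⟩
    exact hMVT T hT
  have hne2 : (Set.Ioo (0:ℝ) δ).Nonempty := ⟨δ/2, half_pos hδpos, half_lt_self hδpos⟩
  set m : ℝ := sInf (G '' Set.Ioo 0 δ) with hmdef
  have hGlim : Tendsto G (𝓝[>] (0:ℝ)) (𝓝 m) :=
    MonotoneOn.tendsto_nhdsWithin_Ioo_right hne2
      ((hGmono.monotoneOn).mono Set.Ioo_subset_Ioc_self) hbdd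
  set l : ℝ := s * m with hldef
  have hFlim : Tendsto F (𝓝[>] (0:ℝ)) (𝓝 l) := by
    have : F = fun T => s * G T := by
      funext T
      simp only [hGdef]
      rw [← mul_assoc, hss, one_mul]
    rw [this]
    exact hGlim.const_mul s
  -- l ≥ 0
  have hIocb : Set.Ioc (0:ℝ) b ∈ 𝓝[>] (0:ℝ) := Ioc_mem_nhdsGT_of_mem ⟨le_refl 0, hb⟩
  have hl_nonneg : 0 ≤ l := by
    refine ge_of_tendsto hFlim ?_
    filter_upwards [hIocb] with T hT
    exact (div_pos (hpos T hT) (hpos' T hT)).le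
  -- main contradiction: l > 0 is impossible
  have hl0 : l = 0 := by
    by_contra hlne
    have hl : 0 < l := lt_of_le_of_ne hl_nonneg (Ne.symm hlne)
    have hF_big : ∀ᶠ T in 𝓝[>] (0:ℝ), l / 2 < F T :=
      hFlim.eventually (eventually_gt_nhds (by linarith))
    obtain ⟨η₀, hη₀, hηsub⟩ := mem_nhdsGT_iff_exists_Ioc_subset.mp hF_big
    set η : ℝ := min η₀ b with hηdef
    have hηpos : 0 < η := lt_min hη₀ hb
    have hηb : η ≤ b := min_le_right _ _
    have hFη : ∀ T ∈ Set.Ioc (0:ℝ) η, l / 2 < F T := by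
      intro T hT
      exact hηsub ⟨hT.1, hT.2.trans (min_le_left _ _)⟩
    -- log Ω tends to -∞
    have hΩin : Tendsto Ω (𝓝[>] (0:ℝ)) (𝓝[>] (0:ℝ)) := by
      rw [tendsto_nhdsWithin_iff]
      refine ⟨hΩ0, ?_⟩
      filter_upwards [hIocb] with T hT
      exact hpos T hT
    have hlog_bot : Tendsto (fun T => Real.log (Ω T)) (𝓝[>] (0:ℝ)) atBot :=
      Real.tendsto_log_nhdsGT_zero.comp hΩin
    -- but log Ω is bounded below on (0, η)
    have hlogder : ∀ T ∈ Set.Ioc (0:ℝ) b,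
        HasDerivAt (fun t => Real.log (Ω t)) (deriv Ω T / Ω T) T := by
      intro T hT
      exact ((hd1 T hT).hasDerivAt).log (hpos T hT).ne'
    have hlb : ∀ T ∈ Set.Ioo (0:ℝ) η, Real.log (Ω η) - 2 / l * η ≤ Real.log (Ω T) := by
      intro T hT
      have hcont : ContinuousOn (fun t => Real.log (Ω t)) (Set.Icc T η) := by
        intro x hx
        have hx' : x ∈ Set.Ioc (0:ℝ) b := ⟨hT.1.trans_le hx.1, hx.2.trans hηb⟩
        exact ((hlogder x hx').differentiableAt.continuousAt).continuousWithinAt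
      have hder : ∀ x ∈ Set.Ioo T η, HasDerivAt (fun t => Real.log (Ω t)) (deriv Ω x / Ω x) x := by
        intro x hx
        exact hlogder x ⟨hT.1.trans hx.1, hx.2.le.trans hηb⟩
      obtain ⟨ξ, hξ, hslope⟩ := exists_hasDerivAt_eq_slope (fun t => Real.log (Ω t))
        (fun x => deriv Ω x / Ω x) hT.2 hcont hder
      have hξη : ξ ∈ Set.Ioc (0:ℝ) η := ⟨hT.1.trans hξ.1, hξ.2.le⟩
      have hξb : ξ ∈ Set.Ioc (0:ℝ) b := ⟨hξη.1, hξη.2.trans hηb⟩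
      have hFξ : l / 2 < F ξ := hFη ξ hξη
      have hFξpos : 0 < F ξ := lt_trans (by linarith) hFξ
      have hinv : deriv Ω ξ / Ω ξ < 2 / l := by
        have h1 : deriv Ω ξ / Ω ξ = (F ξ)⁻¹ := by
          simp only [hFdef]
          rw [inv_div]
        rw [h1]
        have h2 : (F ξ)⁻¹ < (l / 2)⁻¹ :=
          inv_strictAnti₀ (by linarith) hFξ
        calc (F ξ)⁻¹ < (l / 2)⁻¹ := h2
          _ = 2 / l := by rw [inv_div]
      have hslope' : Real.log (Ω η) - Real.log (Ω T) = (deriv Ω ξ / Ω ξ) * (η - T) := by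
        rw [eq_div_iff (sub_ne_zero.mpr (ne_of_gt hT.2))] at hslope
        linarith [hslope]
      have hηT : 0 < η - T := by linarith [hT.2]
      have h3 : Real.log (Ω η) - Real.log (Ω T) ≤ 2 / l * η := by
        rw [hslope']
        calc (deriv Ω ξ / Ω ξ) * (η - T) ≤ 2 / l * (η - T) :=
              mul_le_mul_of_nonneg_right hinv.le hηT.le
          _ ≤ 2 / l * η := by
              apply mul_le_mul_of_nonneg_left (by linarith [hT.1]) (by positivity)
      linarith
    -- contradiction
    have hbad : ∀ᶠ T in 𝓝[>] (0:ℝ),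
        Real.log (Ω T) < Real.log (Ω η) - 2 / l * η :=
      hlog_bot.eventually (eventually_lt_atBot _)
    have hIooη : Set.Ioo (0:ℝ) η ∈ 𝓝[>] (0:ℝ) := Ioo_mem_nhdsGT_of_mem ⟨le_refl 0, hηpos⟩
    obtain ⟨T, hT1, hT2⟩ := (hbad.and (eventually_mem_set.mpr hIooη)).exists
    exact absurd (hlb T hT2) (not_le.mpr hT1)
  rw [hl0] at hFlim
  exact hFlim
end

section
/- Let μ, p, L : (0,b] → ℝ with μ(T) > 0 near 0, L(T) → -∞ as T → 0⁺, and p(T) = -(2/3)·L(T)·μ(T)·(1 + o(1)) as T → 0⁺. Then there exists δ ∈ (0,b] such that μ(T)+p(T) ≥ 0 and μ(T)+3p(T) ≥ 0 for all T ∈ (0,δ], but for every δ ∈ (0,b] there exists T ∈ (0,δ] with p(T) > μ(T). -/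
open Real Filter Set Topology

theorem stmt_10 (b : ℝ) (hb : 0 < b) (μ p L : ℝ → ℝ)
    (hμpos : ∀ᶠ T in 𝓝[>] (0:ℝ), 0 < μ T)
    (hL : Tendsto L (𝓝[>] (0:ℝ)) atBot)
    (ε : ℝ → ℝ) (hε : Tendsto ε (𝓝[>] (0:ℝ)) (𝓝 0))
    (hp : ∀ᶠ T in 𝓝[>] (0:ℝ), p T = -(2/3) * L T * μ T * (1 + ε T)) :
    (∃ δ, 0 < δ ∧ δ ≤ b ∧ ∀ T ∈ Set.Ioc 0 δ, 0 ≤ μ T + p T ∧ 0 ≤ μ T + 3 * p T) ∧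
    (∀ δ, 0 < δ → δ ≤ b → ∃ T ∈ Set.Ioc (0:ℝ) δ, μ T < p T) := by
  have hL3 : ∀ᶠ T in 𝓝[>] (0:ℝ), L T ≤ -6 := hL.eventually_le_atBot (-6)
  have hε2 : ∀ᶠ T in 𝓝[>] (0:ℝ), |ε T| < 1/2 := by
    have := hε.eventually (eventually_abs_sub_lt 0 (by norm_num : (0:ℝ) < 1/2))
    simpa using this
  have key : ∀ᶠ T in 𝓝[>] (0:ℝ),
      0 ≤ μ T + p T ∧ 0 ≤ μ T + 3 * p T ∧ μ T < p T := by
    filter_upwards [hμpos, hL3, hε2, hp] with T h1 h2 h3 h4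
    obtain ⟨h3a, h3b⟩ := abs_lt.mp h3
    have hcoef : (2:ℝ) ≤ -(2/3) * L T * (1 + ε T) := by
      nlinarith [mul_nonneg (show (0:ℝ) ≤ -(2/3) * L T - 4 by linarith)
        (show (0:ℝ) ≤ 1 + ε T - 1/2 by linarith)]
    have hpge : 2 * μ T ≤ p T := by
      rw [h4]; nlinarith [mul_le_mul_of_nonneg_right hcoef h1.le]
    refine ⟨by nlinarith, by nlinarith, by nlinarith⟩
  obtain ⟨a, ha, hsub⟩ := mem_nhdsGT_iff_exists_Ioo_subset.mp key
  simp only [Set.mem_Ioi] at ha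
  constructor
  · refine ⟨min (a/2) b, lt_min (by linarith) hb, min_le_right _ _, ?_⟩
    intro T hT
    have hTa : T ∈ Set.Ioo (0:ℝ) a :=
      ⟨hT.1, lt_of_le_of_lt (hT.2.trans (min_le_left _ _)) (by linarith)⟩
    exact ⟨(hsub hTa).1, (hsub hTa).2.1⟩
  · intro δ hδ hδb
    refine ⟨min δ (a/2), ⟨lt_min hδ (by linarith), min_le_left _ _⟩, ?_⟩
    have : min δ (a/2) ∈ Set.Ioo (0:ℝ) a :=
      ⟨lt_min hδ (by linarith), lt_of_le_of_lt (min_le_right _ _) (by linarith)⟩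
    exact (hsub this).2.2
end
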